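/- In a 2-connected graph G, for any edge e = (u,u') and any vertex w not incident to e, there exists a simple cycle containing both the edge e and the vertex w. -/

import Mathlib

/-- `G` is `k`-vertex-connected: more than `k` vertices and no set of fewer than `k`
vertices disconnects it. -/
def IsKConnected {V : Type*} [Fintype V] (G : SimpleGraph V) (k : ℕ) : Prop :=
  k + 1 ≤ Fintype.card V ∧
    ∀ S : Finset V, S.card < k → (G.induce (↑S : Set V)ᶜ).Connected

open SimpleGraph Walk

section CycleAux
variable {V : Type*} {G : SimpleGraph V}

private lemma append_isPath {a b c : V} {p : G.Walk a b} {q : G.Walk b c}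
    (hp : p.IsPath) (hq : q.IsPath)
    (hint : ∀ z, z ∈ p.support → z ∈ q.support → z = b) : (p.append q).IsPath := by
  apply IsPath.mk'
  rw [support_append, List.nodup_append]
  refine ⟨hp.support_nodup, hq.support_nodup.tail, ?_⟩
  intro z hz _ hz' rfl
  have hzq : z ∈ q.support := List.mem_of_mem_tail hz'
  have := hint z hz hzq
  subst this
  have := hq.support_nodup
  rw [support_eq_cons] at this
  exact (List.nodup_cons.mp this).1 hz'

private lemma first_hit {a b : V} (Q : G.Walk a b) (S : Set V) :
    Q.IsPath → b ∈ S →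
    ∃ (y : V) (q : G.Walk a y), q.IsPath ∧ y ∈ S ∧ (∀ z ∈ q.support, z ∈ S → z = y) ∧
      (∀ z ∈ q.support, z ∈ Q.support) := by
  classical
  induction Q with
  | nil => exact fun _ hb => ⟨_, .nil, IsPath.nil, hb, by simp, by simp⟩
  | @cons a e b h p ih =>
    intro hQ hb
    by_cases ha : a ∈ S
    · refine ⟨a, .nil, IsPath.nil, ha, by simp, by simp⟩
    · obtain ⟨y, q, hq, hy, hfirst, hsub⟩ := ih hQ.of_cons hb
      have haq : a ∉ q.support := fun hc =>
        ((cons_isPath_iff h p).mp hQ).2 (hsub a hc)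
      refine ⟨y, .cons h q, hq.cons haq, hy, ?_, ?_⟩
      · intro z hz hzS
        rw [support_cons, List.mem_cons] at hz
        rcases hz with rfl | hz
        · exact absurd hzS ha
        · exact hfirst z hz hzS
      · intro z hz
        rw [support_cons, List.mem_cons] at hz
        rcases hz with rfl | hz
        · exact start_mem_support _
        · rw [support_cons]
          exact List.mem_cons_of_mem _ (hsub z hz)

private lemma split_at_edge {a b c d : V} (R : G.Walk a b) (h : s(c,d) ∈ R.edges) :
    (∃ (h' : G.Adj c d) (R1 : G.Walk a c) (R2 : G.Walk d b), R = R1.append (.cons h' R2)) ∨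
    (∃ (h' : G.Adj d c) (R1 : G.Walk a d) (R2 : G.Walk c b), R = R1.append (.cons h' R2)) := by
  induction R with
  | nil => simp at h
  | @cons a e b hae p ih =>
    rw [edges_cons, List.mem_cons] at h
    rcases h with h | h
    · rw [Sym2.eq_iff] at h
      rcases h with ⟨rfl, rfl⟩ | ⟨rfl, rfl⟩
      · exact Or.inl ⟨hae, .nil, p, by simp⟩
      · exact Or.inr ⟨hae, .nil, p, by simp⟩
    · rcases ih h with ⟨h', R1, R2, rfl⟩ | ⟨h', R1, R2, rfl⟩
      · exact Or.inl ⟨h', .cons hae R1, R2, by simp⟩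
      · exact Or.inr ⟨h', .cons hae R1, R2, by simp⟩

private lemma take_drop_inter [DecidableEq V] {a b z : V} {R : G.Walk a b} (hR : R.IsPath)
    (hz : z ∈ R.support) :
    ∀ t, t ∈ (R.takeUntil z hz).support → t ∈ (R.dropUntil z hz).support → t = z := by
  intro t ht hd
  have hnd := hR.support_nodup
  rw [← take_spec R hz, support_append] at hnd
  rcases (by rw [support_eq_cons] at hd; exact List.mem_cons.mp hd) with h | h
  · exact h
  · exact ((List.disjoint_of_nodup_append hnd) ht h).elim

private lemma two_paths_cycle {u u' w : V} (he : G.Adj u u')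
    (p : G.Walk w u) (q : G.Walk w u') (hp : p.IsPath) (hq : q.IsPath)
    (hu'p : u' ∉ p.support) (huq : u ∉ q.support)
    (hint : ∀ z, z ∈ p.support → z ∈ q.support → z = w) :
    ∃ (x : V) (c : G.Walk x x), c.IsCycle ∧ s(u, u') ∈ c.edges ∧ w ∈ c.support := by
  refine ⟨w, p.append (.cons he q.reverse), ?_, ?_, start_mem_support _⟩
  · have hedges : (p.append (Walk.cons he q.reverse)).edges
        = p.edges ++ s(u, u') :: q.edges.reverse := by
      rw [edges_append, edges_cons, edges_reverse]
    have htail : (p.append (Walk.cons he q.reverse)).support.tail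
        = p.support.tail ++ q.support.reverse := by
      rw [tail_support_append, support_cons, List.tail_cons, support_reverse]
    have hcross : ∀ e, e ∈ p.edges → e ∈ q.edges → False := by
      intro e hep heq
      induction e with
      | h x y =>
        have hx : x = w := hint x (p.fst_mem_support_of_mem_edges hep)
          (q.fst_mem_support_of_mem_edges heq)
        have hy : y = w := hint y (p.snd_mem_support_of_mem_edges hep)
          (q.snd_mem_support_of_mem_edges heq)
        have hadj := p.adj_of_mem_edges hep
        rw [hx, hy] at hadj
        exact G.loopless.irrefl _ hadj
    constructor
    constructor
    constructor
    · -- edges nodup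
      rw [hedges, List.nodup_append]
      refine ⟨hp.isTrail.edges_nodup, ?_, ?_⟩
      · rw [List.nodup_cons]
        refine ⟨fun hc => ?_, by rw [List.nodup_reverse]; exact hq.isTrail.edges_nodup⟩
        rw [List.mem_reverse] at hc
        exact huq (q.fst_mem_support_of_mem_edges hc)
      · intro e hep _ heq rfl
        rw [List.mem_cons, List.mem_reverse] at heq
        rcases heq with rfl | heq
        · exact hu'p (p.snd_mem_support_of_mem_edges hep)
        · exact hcross e hep heq
    · -- ne nil
      intro hnil
      have : s(u, u') ∈ (p.append (Walk.cons he q.reverse)).edges := by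
        rw [hedges]; simp
      rw [hnil] at this
      simp at this
    · -- support tail nodup
      rw [htail, List.nodup_append, List.nodup_reverse]
      refine ⟨hp.support_nodup.tail, hq.support_nodup, ?_⟩
      intro z hz _ hz' rfl
      rw [List.mem_reverse] at hz'
      have hzw : z = w := hint z (List.mem_of_mem_tail hz) hz'
      subst hzw
      have := hp.support_nodup
      rw [support_eq_cons] at this
      exact (List.nodup_cons.mp this).1 hz
  · rw [edges_append, edges_cons]
    simp

private lemma avoid_walk [Fintype V] (h2 : IsKConnected G 2) (x a b : V) (ha : a ≠ x) (hb : b ≠ x) :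
    ∃ p : G.Walk a b, p.IsPath ∧ x ∉ p.support := by
  classical
  have hconn := h2.2 {x} (by simp)
  have hax : a ∈ ((↑({x} : Finset V) : Set V))ᶜ := by simp [ha]
  have hbx : b ∈ ((↑({x} : Finset V) : Set V))ᶜ := by simp [hb]
  obtain ⟨q⟩ := hconn ⟨a, hax⟩ ⟨b, hbx⟩
  refine ⟨(q.map (Embedding.induce _).toHom).bypass, Walk.bypass_isPath _, fun hx => ?_⟩
  have hmem := (q.map (Embedding.induce _).toHom).support_bypass_subset hx
  rw [Walk.support_map] at hmem
  obtain ⟨⟨z, hz⟩, _, hzz⟩ := List.mem_map.mp hmem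
  simp at hzz
  subst hzz
  simp at hz

private lemma conn_of_two [Fintype V] (h2 : IsKConnected G 2) : G.Connected := by
  classical
  have hconn := h2.2 ∅ (by simp)
  have hne : Nonempty V := Fintype.card_pos_iff.mp (by have := h2.1; omega)
  have hpre : G.Preconnected := by
    intro a b
    have ha : a ∈ ((↑(∅ : Finset V) : Set V))ᶜ := by simp
    obtain ⟨q⟩ := hconn ⟨a, ha⟩ ⟨b, by simp⟩
    exact ⟨q.map (Embedding.induce _).toHom⟩
  exact Connected.mk hpre


private lemma surgery [DecidableEq V] {u u' w x v y : V} (he : G.Adj u u')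
    (hwu : w ≠ u) (hwu' : w ≠ u') (hwx : G.Adj w x) (hxu : x ≠ u) (hxu' : x ≠ u')
    (hxv : G.Adj x v)
    (R1 : G.Walk v u) (R2 : G.Walk u' x)
    (hR : (R1.append (.cons he R2)).IsPath)
    (hwR : w ∉ (R1.append (.cons he R2)).support)
    (q1 : G.Walk w y) (hq1 : q1.IsPath) (hq1x : x ∉ q1.support)
    (hfirst : ∀ z ∈ q1.support, z ∈ (R1.append (.cons he R2)).support → z = y)
    (hyR : y ∈ (R1.append (.cons he R2)).support) :
    ∃ (z : V) (c : G.Walk z z), c.IsCycle ∧ s(u, u') ∈ c.edges ∧ w ∈ c.support := by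
  set R : G.Walk v x := R1.append (.cons he R2) with hRdef
  have hsupp : R.support = R1.support ++ R2.support := by
    rw [hRdef, support_append, support_cons, List.tail_cons]
  have hnd : (R1.support ++ R2.support).Nodup := by rw [← hsupp]; exact hR.support_nodup
  have hdisj := List.disjoint_of_nodup_append hnd
  have hR1 : R1.IsPath := hR.of_append_left
  have hR2 : R2.IsPath := (hR.of_append_right).of_cons
  have hu'R1 : u' ∉ R1.support := fun hc => hdisj hc (start_mem_support R2)
  have huR2 : u ∉ R2.support := fun hc => hdisj (end_mem_support R1) hc
  have hxR1 : x ∉ R1.support := fun hc => hdisj hc (end_mem_support R2)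
  have hwR1 : w ∉ R1.support := fun hc => hwR (by rw [hsupp]; exact List.mem_append_left _ hc)
  have hwR2 : w ∉ R2.support := fun hc => hwR (by rw [hsupp]; exact List.mem_append_right _ hc)
  have hmemR1 : ∀ z, z ∈ R1.support → z ∈ R.support := by
    intro z hz; rw [hsupp]; exact List.mem_append_left _ hz
  have hmemR2 : ∀ z, z ∈ R2.support → z ∈ R.support := by
    intro z hz; rw [hsupp]; exact List.mem_append_right _ hz
  have hyy : y ∈ R1.support ∨ y ∈ R2.support := by rw [hsupp] at hyR; exact List.mem_append.mp hyR
  rcases hyy with hy1 | hy2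
  · -- y ∈ R1 : path p = q1 ++ dropUntil, q = w-x + R2.reverse
    have hdropsub : ∀ z, z ∈ (R1.dropUntil y hy1).support → z ∈ R1.support :=
      fun z hz => R1.support_dropUntil_subset hy1 hz
    have hp : (q1.append (R1.dropUntil y hy1)).IsPath := by
      refine append_isPath hq1 (hR1.dropUntil hy1) ?_
      intro z hz hz'
      exact hfirst z hz (hmemR1 z (hdropsub z hz'))
    have hq : (Walk.cons hwx R2.reverse).IsPath := by
      rw [cons_isPath_iff]
      exact ⟨hR2.reverse, by rw [support_reverse, List.mem_reverse]; exact hwR2⟩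
    refine two_paths_cycle he (q1.append (R1.dropUntil y hy1)) (.cons hwx R2.reverse) hp hq ?_ ?_ ?_
    · -- u' ∉ p.support
      rw [mem_support_append_iff]
      rintro (hc | hc)
      · have := hfirst u' hc (hmemR2 u' (start_mem_support R2))
        subst this
        exact hu'R1 hy1
      · exact hu'R1 (hdropsub _ hc)
    · -- u ∉ q.support
      rw [support_cons, List.mem_cons]
      rintro (rfl | hc)
      · exact hwu rfl
      · rw [support_reverse, List.mem_reverse] at hc
        exact huR2 hc
    · -- intersection = {w}
      intro z hz hz'
      rw [support_cons, List.mem_cons] at hz'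
      rcases hz' with rfl | hz'
      · rfl
      · rw [support_reverse, List.mem_reverse] at hz'
        rw [mem_support_append_iff] at hz
        rcases hz with hz | hz
        · have := hfirst z hz (hmemR2 z hz')
          subst this
          exact absurd hz' (fun hc => hdisj hy1 hc)
        · exact absurd hz' (fun hc => hdisj (hdropsub _ hz) hc)
  · -- y ∈ R2 : p = q1 ++ (R2.takeUntil y).reverse : w → u', q = w-x-v + R1 : w → u
    have htakesub : ∀ z, z ∈ (R2.takeUntil y hy2).support → z ∈ R2.support :=
      fun z hz => R2.support_takeUntil_subset hy2 hz
    have hxtake : x ∉ (R2.takeUntil y hy2).support := by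
      intro hc
      have := take_drop_inter hR2 hy2 x hc (end_mem_support _)
      subst this
      exact hq1x (end_mem_support q1)
    have hp : (q1.append (R2.takeUntil y hy2).reverse).IsPath := by
      refine append_isPath hq1 (hR2.takeUntil hy2).reverse ?_
      intro z hz hz'
      rw [support_reverse, List.mem_reverse] at hz'
      exact hfirst z hz (hmemR2 z (htakesub z hz'))
    have hq : (Walk.cons hwx (Walk.cons hxv R1)).IsPath := by
      rw [cons_isPath_iff, cons_isPath_iff]
      refine ⟨⟨hR1, hxR1⟩, ?_⟩
      rw [support_cons, List.mem_cons]
      rintro (rfl | hc)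
      · exact hwx.ne rfl
      · exact hwR1 hc
    have hgoal := two_paths_cycle he.symm (q1.append (R2.takeUntil y hy2).reverse)
      (.cons hwx (.cons hxv R1)) hp hq ?_ ?_ ?_
    · obtain ⟨z, c, hc, hec, hwc⟩ := hgoal
      exact ⟨z, c, hc, by rwa [Sym2.eq_swap] at hec, hwc⟩
    · -- u ∉ p.support
      rw [mem_support_append_iff]
      rintro (hc | hc)
      · have := hfirst u hc (hmemR1 u (end_mem_support R1))
        subst this
        exact huR2 hy2
      · rw [support_reverse, List.mem_reverse] at hc
        exact huR2 (htakesub _ hc)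
    · -- u' ∉ q.support
      rw [support_cons, support_cons, List.mem_cons, List.mem_cons]
      rintro (rfl | rfl | hc)
      · exact hwu' rfl
      · exact hxu' rfl
      · exact hu'R1 hc
    · -- intersection
      intro z hz hz'
      rw [support_cons, support_cons, List.mem_cons, List.mem_cons] at hz'
      rcases hz' with rfl | rfl | hz'
      · rfl
      · -- z = x
        rw [mem_support_append_iff] at hz
        rcases hz with hz | hz
        · exact absurd hz hq1x
        · rw [support_reverse, List.mem_reverse] at hz
          exact absurd hz hxtake
      · -- z ∈ R1
        rw [mem_support_append_iff] at hz
        rcases hz with hz | hz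
        · have := hfirst z hz (hmemR1 z hz')
          subst this
          exact absurd hz' (fun hc => hdisj hc hy2)
        · rw [support_reverse, List.mem_reverse] at hz
          exact absurd hz' (fun hc => hdisj hc (htakesub _ hz))

private lemma base_case [Fintype V] (h2 : IsKConnected G 2) {u u' w : V} (he : G.Adj u u')
    (hwu' : w ≠ u') (haw : G.Adj w u) :
    ∃ (x : V) (c : G.Walk x x), c.IsCycle ∧ s(u, u') ∈ c.edges ∧ w ∈ c.support := by
  obtain ⟨Q, hQ, huQ⟩ := avoid_walk h2 u w u' haw.ne he.ne'
  refine two_paths_cycle he (.cons haw .nil) Q ?_ hQ ?_ huQ ?_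
  · simp [haw.ne]
  · simp
    exact ⟨hwu'.symm, he.ne'⟩
  · intro z hz hz'
    simp at hz
    rcases hz with rfl | rfl
    · rfl
    · exact absurd hz' huQ

private lemma aux_ind [Fintype V] (h2 : IsKConnected G 2) :
    ∀ (n : ℕ) (u u' w : V), G.Adj u u' → w ≠ u → w ≠ u' → G.dist w u ≤ n →
      ∃ (x : V) (c : G.Walk x x), c.IsCycle ∧ s(u, u') ∈ c.edges ∧ w ∈ c.support := by
  classical
  intro n
  induction n with
  | zero =>
    intro u u' w he hwu hwu' hd
    have hr : G.Reachable w u := (conn_of_two h2).preconnected w u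
    exact absurd (hr.dist_eq_zero_iff.mp (Nat.le_zero.mp hd)) hwu
  | succ n ih =>
    intro u u' w he hwu hwu' hd
    by_cases hdn : G.dist w u ≤ n
    · exact ih u u' w he hwu hwu' hdn
    obtain ⟨P, hPlen⟩ := (conn_of_two h2).exists_walk_length_eq_dist w u
    cases P with
    | nil => exact absurd rfl hwu
    | @cons _ x _ hA P' =>
      have hP'len : P'.length ≤ n := by
        have h1 : (Walk.cons hA P').length ≤ n + 1 := by rw [hPlen]; exact hd
        simp only [length_cons] at h1
        omega
      have hdx : G.dist x u ≤ n := le_trans (dist_le P') hP'len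
      by_cases hxu : x = u
      · subst hxu
        exact base_case h2 he hwu' hA
      by_cases hxu' : x = u'
      · subst hxu'
        obtain ⟨z, c, hc, hec, hwc⟩ := base_case h2 he.symm hwu hA
        exact ⟨z, c, hc, by rwa [Sym2.eq_swap] at hec, hwc⟩
      -- main case
      have hwx : w ≠ x := hA.ne
      obtain ⟨z, C, hC, heC, hxC⟩ := ih u u' x he hxu hxu' hdx
      by_cases hwC : w ∈ C.support
      · exact ⟨z, C, hC, heC, hwC⟩
      -- rotate the cycle to start at x
      have hC' : (C.rotate x hxC).IsCycle := hC.rotate hxC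
      have heC' : s(u, u') ∈ (C.rotate x hxC).edges :=
        ((C.rotate_edges x hxC).perm.mem_iff).mpr heC
      have hwC' : w ∉ (C.rotate x hxC).support := by
        intro hc
        rw [mem_support_iff] at hc
        rcases hc with rfl | hc
        · exact hwx rfl
        · have : w ∈ C.support.tail := ((C.support_rotate x hxC).perm.mem_iff).mp hc
          exact hwC (List.mem_of_mem_tail this)
      -- destructure the rotated cycle
      rcases (not_nil_iff.mp hC'.not_nil) with ⟨v, hxv, R, hrot⟩
      rw [hrot] at hC' heC' hwC'
      have hRpath : R.IsPath := ((cons_isCycle_iff R hxv).mp hC').1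
      have heR : s(u, u') ∈ R.edges := by
        rw [edges_cons, List.mem_cons] at heC'
        rcases heC' with hc | hc
        · rw [Sym2.eq_iff] at hc
          rcases hc with ⟨rfl, _⟩ | ⟨_, rfl⟩
          · exact absurd rfl hxu
          · exact absurd rfl hxu'
        · exact hc
      have hwR : w ∉ R.support := by
        rw [support_cons, List.mem_cons] at hwC'
        tauto
      -- path from w to u avoiding x, cut at first hit of R
      obtain ⟨Q, hQ, hxQ⟩ := avoid_walk h2 x w u hwx (fun h => hxu h.symm)
      obtain ⟨y, q1, hq1, hyR, hfirst, hq1sub⟩ :=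
        first_hit Q {t | t ∈ R.support} hQ (R.fst_mem_support_of_mem_edges heR)
      have hq1x : x ∉ q1.support := fun hc => hxQ (hq1sub x hc)
      -- split R at the edge
      rcases split_at_edge R heR with ⟨h', R1, R2, hRsplit⟩ | ⟨h', R1, R2, hRsplit⟩
      · subst hRsplit
        exact surgery h' hwu hwu' hA hxu hxu' hxv R1 R2
          hRpath hwR q1 hq1 hq1x hfirst hyR
      · subst hRsplit
        obtain ⟨z', c, hc, hec, hwc⟩ := surgery h' hwu' hwu hA
          hxu' hxu hxv R1 R2 hRpath hwR q1 hq1 hq1x hfirst hyR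
        exact ⟨z', c, hc, by rwa [Sym2.eq_swap] at hec, hwc⟩

end CycleAux

/-- In a 2-connected graph, any edge and any vertex not incident to it lie on a
common simple cycle. -/
theorem cycle_through_edge_and_vertex {V : Type*} [Fintype V]
    (G : SimpleGraph V) (h2 : IsKConnected G 2)
    (u u' w : V) (he : G.Adj u u') (hwu : w ≠ u) (hwu' : w ≠ u') :
    ∃ (x : V) (c : G.Walk x x), c.IsCycle ∧
      s(u, u') ∈ c.edges ∧ w ∈ c.support := by
  exact aux_ind h2 (G.dist w u) u u' w he hwu hwu' le_rfl
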